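/- (Newton–Kantorovich-type root theorem.) Let F : ℝ^d → ℝ^d be continuously differentiable, and fix a norm ‖·‖ on ℝ^d together with its induced operator norm on linear maps. Suppose there are constants 0 < κ < 1 and ρ > 0, a vector w0 ∈ ℝ^d, and an invertible matrix A ∈ ℝ^{d×d} such that (1) ‖I − A^{−1}·DF(w)‖ ≤ κ for all w with ‖w − w0‖ ≤ ρ, and (2) ‖A^{−1}·F(w0)‖ ≤ (1 − κ)ρ. Then F has a unique root w* in the closed ball {w : ‖w − w0‖ ≤ ρ}, and this root satisfies ‖w* − w0‖ ≤ (1 − κ)^{−1}·‖A^{−1}·F(w0)‖. -/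

import Mathlib

/-- Newton–Kantorovich-type root theorem. Here `ℝ^d` with an arbitrary
norm is modelled as a `d`-dimensional real normed vector space `E`; `DF(w)` is the
Fréchet derivative `fderiv ℝ F w`, and the invertible matrix `A` is a continuous
linear equivalence of `E`. -/
theorem newton_kantorovich_root
    (d : ℕ) (hd : 1 ≤ d)
    {E : Type*} [NormedAddCommGroup E] [NormedSpace ℝ E] [FiniteDimensional ℝ E]
    (hdim : Module.finrank ℝ E = d)
    (F : E → E) (hF : ContDiff ℝ 1 F)
    (κ ρ : ℝ) (hκ0 : 0 < κ) (hκ1 : κ < 1) (hρ : 0 < ρ)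
    (w₀ : E) (A : E ≃L[ℝ] E)
    (h1 : ∀ w : E, ‖w - w₀‖ ≤ ρ →
      ‖ContinuousLinearMap.id ℝ E - (A.symm : E →L[ℝ] E).comp (fderiv ℝ F w)‖ ≤ κ)
    (h2 : ‖(A.symm : E →L[ℝ] E) (F w₀)‖ ≤ (1 - κ) * ρ) :
    ∃ w : E, ‖w - w₀‖ ≤ ρ ∧ F w = 0 ∧
      (∀ w' : E, ‖w' - w₀‖ ≤ ρ → F w' = 0 → w' = w) ∧
      ‖w - w₀‖ ≤ (1 - κ)⁻¹ * ‖(A.symm : E →L[ℝ] E) (F w₀)‖ := by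
  set G : E → E := fun w => w - (A.symm : E →L[ℝ] E) (F w) with hGdef
  have hFdiff : Differentiable ℝ F := hF.differentiable one_ne_zero
  have hdiff : ∀ w : E, HasFDerivAt G
      (ContinuousLinearMap.id ℝ E - (A.symm : E →L[ℝ] E).comp (fderiv ℝ F w)) w := by
    intro w
    exact (hasFDerivAt_id w).sub
      (((A.symm : E →L[ℝ] E).hasFDerivAt).comp w (hFdiff w).hasFDerivAt)
  set s : Set E := Metric.closedBall w₀ ρ with hsdef
  have hmem : ∀ w : E, w ∈ s ↔ ‖w - w₀‖ ≤ ρ := by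
    intro w; simp [hsdef, Metric.mem_closedBall, dist_eq_norm]
  set K : NNReal := ⟨κ, hκ0.le⟩ with hKdef
  have hlip : LipschitzOnWith K G s := by
    apply (convex_closedBall w₀ ρ).lipschitzOnWith_of_nnnorm_fderiv_le
      (fun x _ => (hdiff x).differentiableAt)
    intro x hx
    rw [(hdiff x).fderiv, ← NNReal.coe_le_coe]
    exact h1 x ((hmem x).1 hx)
  have hdistle : ∀ x ∈ s, ∀ y ∈ s, ‖G x - G y‖ ≤ κ * ‖x - y‖ := by
    intro x hx y hy
    have := hlip.dist_le_mul x hx y hy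
    rw [dist_eq_norm, dist_eq_norm] at this; exact this
  have hw₀s : w₀ ∈ s := by rw [hmem]; simp [hρ.le]
  have hGw₀ : ‖G w₀ - w₀‖ ≤ (1 - κ) * ρ := by
    have : G w₀ - w₀ = -((A.symm : E →L[ℝ] E) (F w₀)) := by simp [hGdef]
    rw [this, norm_neg]; exact h2
  have hmaps : Set.MapsTo G s s := by
    intro w hws
    have hw : ‖w - w₀‖ ≤ ρ := (hmem w).1 hws
    rw [hmem]
    calc ‖G w - w₀‖ ≤ ‖G w - G w₀‖ + ‖G w₀ - w₀‖ := norm_sub_le_norm_sub_add_norm_sub _ _ _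
      _ ≤ κ * ‖w - w₀‖ + (1 - κ) * ρ := add_le_add (hdistle w hws w₀ hw₀s) hGw₀
      _ ≤ κ * ρ + (1 - κ) * ρ := by nlinarith
      _ = ρ := by ring
  haveI : CompleteSpace E := FiniteDimensional.complete ℝ E
  haveI : CompleteSpace s := Metric.isClosed_closedBall.completeSpace_coe
  haveI : Nonempty s := ⟨⟨w₀, hw₀s⟩⟩
  have hcontr : ContractingWith K (hmaps.restrict G s s) :=
    ⟨by exact_mod_cast hκ1, hlip.mapsToRestrict hmaps⟩
  set wfix : s := hcontr.fixedPoint (hmaps.restrict G s s) with hwfix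
  have hfixed : G (wfix : E) = (wfix : E) := by
    exact congrArg Subtype.val (hcontr.fixedPoint_isFixedPt)
  set w : E := (wfix : E) with hw
  have hws : w ∈ s := wfix.2
  have hzero_iff : ∀ x : E, G x = x ↔ F x = 0 := by
    intro x
    rw [hGdef]
    simp only [sub_eq_self, ContinuousLinearEquiv.coe_coe,
      ContinuousLinearEquiv.map_eq_zero_iff]
  have hFw : F w = 0 := (hzero_iff w).1 hfixed
  refine ⟨w, (hmem w).1 hws, hFw, ?_, ?_⟩
  · intro w' hw' hFw'
    have hw's : w' ∈ s := (hmem w').2 hw'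
    have hGw' : G w' = w' := (hzero_iff w').2 hFw'
    have h := hdistle w' hw's w hws
    rw [hGw', hfixed] at h
    have hz : ‖w' - w‖ = 0 := le_antisymm (by nlinarith) (norm_nonneg _)
    exact sub_eq_zero.mp (norm_eq_zero.mp hz)
  · have h := hdistle w hws w₀ hw₀s
    rw [hfixed] at h
    have hb : ‖w - w₀‖ ≤ ‖G w₀ - w₀‖ + κ * ‖w - w₀‖ := by
      calc ‖w - w₀‖ = ‖(G w₀ - w₀) + (w - G w₀)‖ := by abel_nf
        _ ≤ ‖G w₀ - w₀‖ + ‖w - G w₀‖ := norm_add_le _ _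
        _ ≤ ‖G w₀ - w₀‖ + κ * ‖w - w₀‖ := by
            have : ‖w - G w₀‖ = ‖G w - G w₀‖ := by rw [hfixed]
            rw [this]; exact add_le_add le_rfl (hdistle w hws w₀ hw₀s)
    have hGw₀' : ‖G w₀ - w₀‖ = ‖(A.symm : E →L[ℝ] E) (F w₀)‖ := by
      have : G w₀ - w₀ = -((A.symm : E →L[ℝ] E) (F w₀)) := by simp [hGdef]
      rw [this, norm_neg]
    have h1κ : (0:ℝ) < 1 - κ := by linarith
    rw [inv_mul_eq_div, le_div_iff₀ h1κ]
    nlinarith [norm_nonneg (w - w₀)]
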